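/- Every orthogonal product basis of a bipartite system H1 ⊗ H2 with dim H1 = 2 is reducible. That is, given an orthonormal basis {|a_s⟩⊗|b_s⟩ : s = 1,...,2d} of H1 ⊗ H2 by product vectors, there exists a partition of {1,...,2d} into nonempty sets J and K such that ⟨a_j|a_k⟩ = 0 for all j ∈ J and k ∈ K, or there exists such a partition with ⟨b_j|b_k⟩ = 0 for all j ∈ J, k ∈ K. -/

import Mathlib

/-- Concrete tensor product of two vectors in Euclidean spaces. -/
noncomputable def tensor2 {ι κ : Type*} [Fintype ι] [Fintype κ]
    (a : EuclideanSpace ℂ ι) (b : EuclideanSpace ℂ κ) :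
    EuclideanSpace ℂ (ι × κ) :=
  WithLp.toLp 2 (fun p : ι × κ => a p.1 * b p.2)

open scoped InnerProductSpace

lemma inner_tensor2 {ι κ : Type*} [Fintype ι] [Fintype κ]
    (a c : EuclideanSpace ℂ ι) (b e : EuclideanSpace ℂ κ) :
    (inner ℂ (tensor2 a b) (tensor2 c e) : ℂ) = inner ℂ a c * inner ℂ b e := by
  simp only [tensor2, PiLp.inner_apply, RCLike.inner_apply']
  rw [Finset.sum_mul_sum, ← Finset.sum_product']
  simp only [Finset.univ_product_univ]
  apply Finset.sum_congr rfl
  intro p _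
  simp [map_mul]
  ring

/-- The orthogonal complement direction of a vector in `ℂ²`. -/
noncomputable def perp (v : EuclideanSpace ℂ (Fin 2)) : EuclideanSpace ℂ (Fin 2) :=
  WithLp.toLp 2 ![-(starRingEnd ℂ) (v 1), (starRingEnd ℂ) (v 0)]

lemma inner_two (x y : EuclideanSpace ℂ (Fin 2)) :
    (inner ℂ x y : ℂ) = (starRingEnd ℂ) (x 0) * y 0 + (starRingEnd ℂ) (x 1) * y 1 := by
  simp [PiLp.inner_apply, RCLike.inner_apply', Fin.sum_univ_two]; ring

lemma inner_self_one {ι : Type*} [Fintype ι] (v : EuclideanSpace ℂ ι) (hv : ‖v‖ = 1) :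
    (inner ℂ v v : ℂ) = 1 := by
  rw [inner_self_eq_norm_sq_to_K, hv]; norm_num

lemma inner_v_perp (v : EuclideanSpace ℂ (Fin 2)) : (inner ℂ v (perp v) : ℂ) = 0 := by
  simp [inner_two, perp, PiLp.toLp_apply]; ring

lemma inner_perp_self (v : EuclideanSpace ℂ (Fin 2)) (hv : ‖v‖ = 1) :
    (inner ℂ (perp v) (perp v) : ℂ) = 1 := by
  have h2 := inner_self_one v hv
  rw [inner_two] at h2 ⊢
  simp only [perp, PiLp.toLp_apply, Matrix.cons_val_zero, Matrix.cons_val_one, Matrix.head_cons, map_neg,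
    Complex.conj_conj]
  linear_combination h2

lemma expand2 (v : EuclideanSpace ℂ (Fin 2)) (hv : ‖v‖ = 1) (x : EuclideanSpace ℂ (Fin 2)) :
    x = (inner ℂ v x : ℂ) • v + (inner ℂ (perp v) x : ℂ) • perp v := by
  have h2 := inner_self_one v hv
  rw [inner_two] at h2
  ext i
  fin_cases i
  · simp only [Fin.mk_zero, inner_two, perp, PiLp.add_apply, PiLp.smul_apply, smul_eq_mul,
      Matrix.cons_val_zero, Matrix.cons_val_one, Matrix.head_cons, map_neg, Complex.conj_conj]
    linear_combination (-(x 0)) * h2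
  · simp only [Fin.mk_one, inner_two, perp, PiLp.add_apply, PiLp.smul_apply, smul_eq_mul,
      Matrix.cons_val_zero, Matrix.cons_val_one, Matrix.head_cons, map_neg, Complex.conj_conj]
    linear_combination (-(x 1)) * h2

/-- If `x ⊥ perp v` then `x` is a multiple of `v`. -/
lemma expand_v (v : EuclideanSpace ℂ (Fin 2)) (hv : ‖v‖ = 1) (x : EuclideanSpace ℂ (Fin 2))
    (hx : (inner ℂ (perp v) x : ℂ) = 0) : x = (inner ℂ v x : ℂ) • v := by
  have h := expand2 v hv x
  rw [hx, zero_smul, add_zero] at h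
  exact h

/-- If `x ⊥ v` then `x` is a multiple of `perp v`. -/
lemma expand_w (v : EuclideanSpace ℂ (Fin 2)) (hv : ‖v‖ = 1) (x : EuclideanSpace ℂ (Fin 2))
    (hx : (inner ℂ v x : ℂ) = 0) : x = (inner ℂ (perp v) x : ℂ) • perp v := by
  have h := expand2 v hv x
  rw [hx, zero_smul, zero_add] at h
  exact h

/-- Every orthogonal product basis of a bipartite system `2 ⊗ d` is reducible: one can split
the index set into two nonempty parts `J` and `Jᶜ` so that the first factors (or the second
factors) over `J` are all orthogonal to those over `Jᶜ`. -/
theorem stmt2 (d : ℕ) (hd : 0 < d)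
    (a : Fin (2 * d) → EuclideanSpace ℂ (Fin 2))
    (b : Fin (2 * d) → EuclideanSpace ℂ (Fin d))
    (ha : ∀ s, ‖a s‖ = 1) (hb : ∀ s, ‖b s‖ = 1)
    (honb : Orthonormal ℂ (fun s => tensor2 (a s) (b s)))
    (hspan : Submodule.span ℂ (Set.range fun s => tensor2 (a s) (b s)) = ⊤) :
    (∃ J : Set (Fin (2 * d)), J.Nonempty ∧ Jᶜ.Nonempty ∧
        ∀ j ∈ J, ∀ k ∈ Jᶜ, (inner ℂ (a j) (a k) : ℂ) = 0) ∨
    (∃ J : Set (Fin (2 * d)), J.Nonempty ∧ Jᶜ.Nonempty ∧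
        ∀ j ∈ J, ∀ k ∈ Jᶜ, (inner ℂ (b j) (b k) : ℂ) = 0) := by
  classical
  have horth : ∀ s t : Fin (2 * d), s ≠ t →
      (inner ℂ (a s) (a t) : ℂ) * (inner ℂ (b s) (b t) : ℂ) = 0 := by
    intro s t hst
    have h : (inner ℂ (tensor2 (a s) (b s)) (tensor2 (a t) (b t)) : ℂ) = 0 := honb.2 hst
    rwa [inner_tensor2] at h
  have h2d : 0 < 2 * d := by omega
  set s0 : Fin (2 * d) := ⟨0, h2d⟩ with hs0
  set E : Fin (2 * d) → Fin (2 * d) → Prop :=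
    fun s t => (inner ℂ (b s) (b t) : ℂ) ≠ 0 with hE
  set J : Set (Fin (2 * d)) := {t | Relation.ReflTransGen E s0 t} with hJdef
  have hs0J : s0 ∈ J := Relation.ReflTransGen.refl
  by_cases hJc : Jᶜ.Nonempty
  · right
    refine ⟨J, ⟨s0, hs0J⟩, hJc, ?_⟩
    intro j hj k hk
    by_contra hbjk
    exact hk (Relation.ReflTransGen.tail hj hbjk)
  · -- every index is reachable from s0
    have hall : ∀ t, Relation.ReflTransGen E s0 t := by
      intro t
      by_contra h
      exact hJc ⟨t, h⟩
    set v := a s0 with hv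
    have hvnorm : ‖v‖ = 1 := ha s0
    have hane : ∀ t, a t ≠ 0 := by
      intro t h
      have := ha t
      rw [h] at this
      simp at this
    have key : ∀ t, (inner ℂ (perp v) (a t) : ℂ) = 0 ∨ (inner ℂ v (a t) : ℂ) = 0 := by
      intro t
      induction hall t with
      | refl =>
        left
        rw [inner_eq_zero_symm]
        exact inner_v_perp v
      | @tail m u _p hmu ih =>
        rcases eq_or_ne m u with rfl | hne
        · exact ih
        have hao : (inner ℂ (a m) (a u) : ℂ) = 0 := by
          rcases mul_eq_zero.mp (horth m u hne) with h | h
          · exact h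
          · exact absurd h hmu
        rcases ih with h | h
        · right
          have ham := expand_v v hvnorm (a m) h
          have hc : (inner ℂ v (a m) : ℂ) ≠ 0 := by
            intro h0
            exact hane m (by rw [ham, h0, zero_smul])
          rw [ham, inner_smul_left] at hao
          rcases mul_eq_zero.mp hao with h' | h'
          · exact absurd ((map_eq_zero (starRingEnd ℂ)).mp h') hc
          · exact h'
        · left
          have ham := expand_w v hvnorm (a m) h
          have hc : (inner ℂ (perp v) (a m) : ℂ) ≠ 0 := by
            intro h0
            exact hane m (by rw [ham, h0, zero_smul])
          rw [ham, inner_smul_left] at hao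
          rcases mul_eq_zero.mp hao with h' | h'
          · exact absurd ((map_eq_zero (starRingEnd ℂ)).mp h') hc
          · exact h'
    set J' : Set (Fin (2 * d)) := {s | (inner ℂ (perp v) (a s) : ℂ) = 0} with hJ'def
    have hs0J' : s0 ∈ J' := by
      show (inner ℂ (perp v) (a s0) : ℂ) = 0
      rw [inner_eq_zero_symm]
      exact inner_v_perp v
    by_cases hJ'c : J'ᶜ.Nonempty
    · left
      refine ⟨J', ⟨s0, hs0J'⟩, hJ'c, ?_⟩
      intro j hj k hk
      have hjw : (inner ℂ (perp v) (a j) : ℂ) = 0 := hj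
      have hkv : (inner ℂ v (a k) : ℂ) = 0 := (key k).resolve_left hk
      have haj := expand_v v hvnorm (a j) hjw
      have hak := expand_w v hvnorm (a k) hkv
      rw [haj, hak, inner_smul_left, inner_smul_right, inner_v_perp]
      ring
    · exfalso
      have hallw : ∀ s, (inner ℂ (perp v) (a s) : ℂ) = 0 := by
        intro s
        by_contra h
        exact hJ'c ⟨s, h⟩
      set z := tensor2 (perp v) (b s0) with hz
      have hzo : ∀ u ∈ Set.range (fun s => tensor2 (a s) (b s)), (inner ℂ u z : ℂ) = 0 := by
        rintro _ ⟨s, rfl⟩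
        rw [hz, inner_tensor2]
        have h0 : (inner ℂ (a s) (perp v) : ℂ) = 0 := by
          rw [inner_eq_zero_symm]
          exact hallw s
        rw [h0, zero_mul]
      have hspan' : ∀ u ∈ Submodule.span ℂ (Set.range fun s => tensor2 (a s) (b s)),
          (inner ℂ u z : ℂ) = 0 := by
        intro u hu
        induction hu using Submodule.span_induction with
        | mem x hx => exact hzo x hx
        | zero => simp
        | add x y _ _ hx hy => rw [inner_add_left, hx, hy, add_zero]
        | smul c x _ hx => rw [inner_smul_left, hx, mul_zero]
      have hzz : (inner ℂ z z : ℂ) = 0 :=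
        hspan' z (by rw [hspan]; trivial)
      rw [hz, inner_tensor2, inner_perp_self v hvnorm, inner_self_one (b s0) (hb s0)] at hzz
      norm_num at hzz
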